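/- If the hidden-event support does not shrink and the auxiliary function does not decrease, the N-best 'likelihood' is non-decreasing: under the hypotheses of the N-best EM proposition (strictly positive q_θ, s_{θ_i}(y) ⊆ s_{θ_{i+1}}(y) for all y in supp f, and θ_{i+1} maximizing the truncated auxiliary function), the truncated likelihood L^s(θ) = Σ_y f(y) log(Σ_{x∈s_θ(y)} q_θ(x,y)) satisfies L^s(θ_{i+1}) ≥ L^s(θ_i). -/

import Mathlib

open scoped BigOperators

/-- Monotonicity of the N-best 'likelihood': under strictly positive models,
non-shrinking sampled supports (`s_{θi}(y) ⊆ s_{θn}(y)` on the support of `f`),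
and a non-decreasing truncated auxiliary function
`A(θ) = Σ_y f(y) Σ_{x∈s_{θi}(y)} q^s_{θi}(x|y) log q_θ(x,y)`, the truncated
likelihood `L^s(θ) = Σ_y f(y) log(Σ_{x∈s_θ(y)} q_θ(x,y))` does not decrease. -/
theorem nbest_likelihood_nondecreasing
    {X Y Θ : Type*} [Fintype X] [Fintype Y] [Nonempty X] [Nonempty Y]
    (q : Θ → X → Y → ℝ) (s : Θ → Y → Finset X) (f : Y → ℝ)
    (hq1 : ∀ θ, ∑ x, ∑ y, q θ x y = 1) (hqpos : ∀ θ x y, 0 < q θ x y)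
    (hs : ∀ θ y, (s θ y).Nonempty)
    (hf1 : ∑ y, f y = 1) (hfnn : ∀ y, 0 ≤ f y)
    (θi θn : Θ)
    (hincl : ∀ y, 0 < f y → s θi y ⊆ s θn y)
    (hA : (∑ y, f y * ∑ x ∈ s θi y,
            (q θi x y / ∑ x' ∈ s θi y, q θi x' y) * Real.log (q θi x y))
        ≤ ∑ y, f y * ∑ x ∈ s θi y,
            (q θi x y / ∑ x' ∈ s θi y, q θi x' y) * Real.log (q θn x y)) :
    (∑ y, f y * Real.log (∑ x ∈ s θi y, q θi x y))
      ≤ ∑ y, f y * Real.log (∑ x ∈ s θn y, q θn x y) := by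
  -- Per-y key inequality
  have key : ∀ y, 0 < f y →
      Real.log (∑ x ∈ s θi y, q θi x y)
        + ((∑ x ∈ s θi y, (q θi x y / ∑ x' ∈ s θi y, q θi x' y) * Real.log (q θn x y))
          - ∑ x ∈ s θi y, (q θi x y / ∑ x' ∈ s θi y, q θi x' y) * Real.log (q θi x y))
      ≤ Real.log (∑ x ∈ s θn y, q θn x y) := by
    intro y hfy
    set P : ℝ := ∑ x' ∈ s θi y, q θi x' y with hP
    have hPpos : 0 < P := Finset.sum_pos (fun x _ => hqpos θi x y) (hs θi y)
    set w : X → ℝ := fun x => q θi x y / P with hw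
    have hwnn : ∀ x ∈ s θi y, 0 ≤ w x := fun x _ => div_nonneg (hqpos θi x y).le hPpos.le
    have hw1 : ∑ x ∈ s θi y, w x = 1 := by
      simp [hw, ← Finset.sum_div, hPpos.ne']
      exact div_self hPpos.ne'
    set r : X → ℝ := fun x => q θn x y / q θi x y with hr
    have hjensen : ∑ x ∈ s θi y, w x • Real.log (r x)
        ≤ Real.log (∑ x ∈ s θi y, w x • r x) := by
      exact (strictConcaveOn_log_Ioi.concaveOn).le_map_sum hwnn hw1
        (fun x _ => div_pos (hqpos θn x y) (hqpos θi x y))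
    have hsum_wr : ∑ x ∈ s θi y, w x • r x = (∑ x ∈ s θi y, q θn x y) / P := by
      have he : ∀ x ∈ s θi y, w x • r x = q θn x y / P := by
        intro x _
        simp only [hw, hr, smul_eq_mul]
        rw [div_mul_div_comm, mul_comm (q θi x y) (q θn x y)]
        exact mul_div_mul_right _ _ (hqpos θi x y).ne'
      rw [Finset.sum_congr rfl he, ← Finset.sum_div]
    have hQpos : 0 < ∑ x ∈ s θi y, q θn x y :=
      Finset.sum_pos (fun x _ => hqpos θn x y) (hs θi y)
    have hmono : (∑ x ∈ s θi y, q θn x y) ≤ ∑ x ∈ s θn y, q θn x y :=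
      Finset.sum_le_sum_of_subset_of_nonneg (hincl y hfy) (fun x _ _ => (hqpos θn x y).le)
    have hlogdiff : ∑ x ∈ s θi y, w x • Real.log (r x)
        = (∑ x ∈ s θi y, w x * Real.log (q θn x y))
          - ∑ x ∈ s θi y, w x * Real.log (q θi x y) := by
      rw [← Finset.sum_sub_distrib]
      apply Finset.sum_congr rfl
      intro x _
      rw [smul_eq_mul, hr, Real.log_div (hqpos θn x y).ne' (hqpos θi x y).ne']
      ring
    have h2 : Real.log ((∑ x ∈ s θi y, q θn x y) / P)
        ≤ Real.log (∑ x ∈ s θn y, q θn x y) - Real.log P := by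
      rw [Real.log_div hQpos.ne' hPpos.ne']
      have := Real.log_le_log hQpos hmono
      linarith
    calc Real.log P + ((∑ x ∈ s θi y, w x * Real.log (q θn x y))
            - ∑ x ∈ s θi y, w x * Real.log (q θi x y))
        = Real.log P + ∑ x ∈ s θi y, w x • Real.log (r x) := by rw [hlogdiff]
      _ ≤ Real.log P + Real.log (∑ x ∈ s θi y, w x • r x) := by linarith
      _ = Real.log P + Real.log ((∑ x ∈ s θi y, q θn x y) / P) := by rw [hsum_wr]
      _ ≤ Real.log (∑ x ∈ s θn y, q θn x y) := by linarith
  -- Combine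
  have hstep : ∀ y,
      f y * Real.log (∑ x ∈ s θi y, q θi x y)
        + (f y * (∑ x ∈ s θi y, (q θi x y / ∑ x' ∈ s θi y, q θi x' y) * Real.log (q θn x y))
          - f y * ∑ x ∈ s θi y, (q θi x y / ∑ x' ∈ s θi y, q θi x' y) * Real.log (q θi x y))
      ≤ f y * Real.log (∑ x ∈ s θn y, q θn x y) := by
    intro y
    rcases lt_or_eq_of_le (hfnn y) with hfy | hfy
    · have := key y hfy
      nlinarith [this, hfy]
    · simp [← hfy]
  have hsum := Finset.sum_le_sum (fun y (_ : y ∈ Finset.univ) => hstep y)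
  rw [Finset.sum_add_distrib, Finset.sum_sub_distrib] at hsum
  linarith
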